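/- Let $B\ge 2$, $0<r<1$, $d\ge 1$, and let $U:[2,\infty)\to[1,\infty)$ satisfy $U(R)\le B\,R^d\,U(2R)^{1-r}$ for all $R\ge 2$, together with an a priori polynomial bound $U(R)\le A_0 R^{N_0}$ for all $R\ge 2$ (some $A_0>0$, integer $N_0\ge 0$). Then there is a constant $A$ (depending on $B,r,d,A_0,N_0$) such that $U(R)\le A\,R^{d/r}$ for all $R\ge 2$. -/

import Mathlib

open Real Filter

/-- iteration lemma. If `U : [2,∞) → [1,∞)` satisfies
`U(R) ≤ B R^d U(2R)^{1-r}` and an a priori polynomial bound `U(R) ≤ A₀ R^{N₀}`,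
then `U(R) ≤ A R^{d/r}` for some constant `A`. -/
theorem stmt4 (B r : ℝ) (d : ℕ) (hd : 1 ≤ d) (hB : 2 ≤ B) (hr0 : 0 < r) (hr1 : r < 1)
    (A₀ : ℝ) (hA₀ : 0 < A₀) (N₀ : ℕ)
    (U : ℝ → ℝ) (hU1 : ∀ R, 2 ≤ R → 1 ≤ U R)
    (hUrec : ∀ R, 2 ≤ R → U R ≤ B * R ^ (d : ℝ) * U (2 * R) ^ (1 - r))
    (hUpoly : ∀ R, 2 ≤ R → U R ≤ A₀ * R ^ (N₀ : ℝ)) :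
    ∃ A : ℝ, ∀ R, 2 ≤ R → U R ≤ A * R ^ ((d : ℝ) / r) := by
  have hr1' : (0:ℝ) ≤ 1 - r := by linarith
  set M : ℝ := max (N₀ : ℝ) ((d : ℝ) / r) with hM
  have hMd : (d : ℝ) / r ≤ M := le_max_right _ _
  have hMN : (N₀ : ℝ) ≤ M := le_max_left _ _
  have hM0 : 0 ≤ M := le_trans (Nat.cast_nonneg _) hMN
  -- sequence of exponents
  set e : ℕ → ℝ := fun k => (d : ℝ) / r + (1 - r) ^ k * (M - (d : ℝ) / r) with he
  have he0 : e 0 = M := by simp [he]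
  have heub : ∀ k, e k ≤ M := by
    intro k
    have h1 : (1 - r) ^ k ≤ 1 := pow_le_one₀ hr1' (by linarith)
    have h2 : 0 ≤ M - (d : ℝ) / r := by linarith
    have h3 : (1 - r) ^ k * (M - (d : ℝ) / r) ≤ M - (d : ℝ) / r :=
      mul_le_of_le_one_left h2 h1
    simp only [he]; linarith
  have helb : ∀ k, (d : ℝ) / r ≤ e k := by
    intro k
    have h2 : 0 ≤ M - (d : ℝ) / r := by linarith
    have := mul_nonneg (pow_nonneg hr1' k) h2
    simp only [he]; linarith
  have herec : ∀ k, e (k + 1) = (d : ℝ) + (1 - r) * e k := by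
    intro k
    simp only [he, pow_succ]
    field_simp
    ring
  -- the constant
  set C : ℝ := B * 2 ^ (M * (1 - r)) with hC
  have hCpos : 0 < C := by positivity
  set A : ℝ := max A₀ (max 1 (C ^ (1 / r))) with hA
  have hA1 : (1:ℝ) ≤ A := le_trans (le_max_left _ _) (le_max_right _ _)
  have hApos : 0 < A := by linarith
  have hAA₀ : A₀ ≤ A := le_max_left _ _
  have hAC : C ^ (1 / r) ≤ A := le_trans (le_max_right _ _) (le_max_right _ _)
  have hCA : C * A ^ (1 - r) ≤ A := by
    have h1 : C ≤ A ^ r := by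
      have h2 : (C ^ (1 / r)) ^ r ≤ A ^ r :=
        Real.rpow_le_rpow (Real.rpow_nonneg hCpos.le _) hAC hr0.le
      rwa [← Real.rpow_mul hCpos.le, one_div,
        inv_mul_cancel₀ hr0.ne', Real.rpow_one] at h2
    calc C * A ^ (1 - r) ≤ A ^ r * A ^ (1 - r) :=
          mul_le_mul_of_nonneg_right h1 (Real.rpow_nonneg hApos.le _)
      _ = A := by rw [← Real.rpow_add hApos]; norm_num
  -- main induction
  have key : ∀ k, ∀ R : ℝ, 2 ≤ R → U R ≤ A * R ^ (e k) := by
    intro k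
    induction k with
    | zero =>
      intro R hR
      have hR1 : (1:ℝ) ≤ R := by linarith
      calc U R ≤ A₀ * R ^ (N₀ : ℝ) := hUpoly R hR
        _ ≤ A * R ^ (e 0) := by
            rw [he0]
            exact mul_le_mul hAA₀ (Real.rpow_le_rpow_of_exponent_le hR1 hMN)
              (Real.rpow_nonneg (by linarith) _) hApos.le
    | succ k ih =>
      intro R hR
      have hR0 : (0:ℝ) < R := by linarith
      have h2R : (2:ℝ) ≤ 2 * R := by linarith
      have h2R0 : (0:ℝ) < 2 * R := by linarith
      have hU2 : U (2 * R) ≤ A * (2 * R) ^ (e k) := ih (2 * R) h2R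
      have hU2pos : (0:ℝ) ≤ U (2 * R) := by linarith [hU1 (2 * R) h2R]
      have step1 : U (2 * R) ^ (1 - r) ≤ (A * (2 * R) ^ (e k)) ^ (1 - r) :=
        Real.rpow_le_rpow hU2pos hU2 hr1'
      have expand : (A * (2 * R) ^ (e k)) ^ (1 - r)
          = A ^ (1 - r) * 2 ^ (e k * (1 - r)) * R ^ (e k * (1 - r)) := by
        rw [Real.mul_rpow hApos.le (Real.rpow_nonneg h2R0.le _),
          ← Real.rpow_mul h2R0.le,
          Real.mul_rpow (by norm_num : (0:ℝ) ≤ 2) hR0.le, mul_assoc]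
      have h2pow : (2:ℝ) ^ (e k * (1 - r)) ≤ 2 ^ (M * (1 - r)) :=
        Real.rpow_le_rpow_of_exponent_le one_le_two
          (mul_le_mul_of_nonneg_right (heub k) hr1')
      calc U R ≤ B * R ^ (d : ℝ) * U (2 * R) ^ (1 - r) := hUrec R hR
        _ ≤ B * R ^ (d : ℝ) * (A ^ (1 - r) * 2 ^ (e k * (1 - r)) * R ^ (e k * (1 - r))) := by
            rw [← expand]
            exact mul_le_mul_of_nonneg_left step1 (by positivity)
        _ ≤ B * R ^ (d : ℝ) * (A ^ (1 - r) * 2 ^ (M * (1 - r)) * R ^ (e k * (1 - r))) := by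
            have : A ^ (1 - r) * 2 ^ (e k * (1 - r)) * R ^ (e k * (1 - r))
                ≤ A ^ (1 - r) * 2 ^ (M * (1 - r)) * R ^ (e k * (1 - r)) := by
              apply mul_le_mul_of_nonneg_right _ (Real.rpow_nonneg hR0.le _)
              exact mul_le_mul_of_nonneg_left h2pow (Real.rpow_nonneg hApos.le _)
            exact mul_le_mul_of_nonneg_left this (by positivity)
        _ = (C * A ^ (1 - r)) * R ^ (e (k + 1)) := by
            rw [herec k, Real.rpow_add hR0, hC]
            ring
        _ ≤ A * R ^ (e (k + 1)) :=
            mul_le_mul_of_nonneg_right hCA (Real.rpow_nonneg hR0.le _)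
  -- pass to the limit
  refine ⟨A, fun R hR => ?_⟩
  have hR0 : (0:ℝ) < R := by linarith
  have hlim : Tendsto (fun k => A * R ^ (e k)) atTop (nhds (A * R ^ ((d : ℝ) / r))) := by
    have h1 : Tendsto e atTop (nhds ((d : ℝ) / r)) := by
      have h2 : Tendsto (fun k : ℕ => (1 - r) ^ k) atTop (nhds 0) :=
        tendsto_pow_atTop_nhds_zero_of_lt_one hr1' (by linarith)
      have h3 : Tendsto (fun k : ℕ => (d : ℝ) / r + (1 - r) ^ k * (M - (d : ℝ) / r))
          atTop (nhds ((d : ℝ) / r + 0 * (M - (d : ℝ) / r))) :=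
        tendsto_const_nhds.add (h2.mul tendsto_const_nhds)
      simpa using h3
    exact tendsto_const_nhds.mul ((Real.continuousAt_const_rpow hR0.ne').tendsto.comp h1 |>.congr (fun k => rfl))
  exact ge_of_tendsto' hlim (fun k => key k R hR)
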